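/- arXiv:1607.08875 — 2 statements merged into one kernel-verified Lean document; each statement's English description precedes it below -/
import Mathlib

section
/- Let E ∈ C³(ℝ^N) and let Ω ⊂ ℝ^N be compact with λ1(x) < 0 < λ2(x) for all x ∈ Ω; set g = min_{x∈Ω} min(−λ1(x), λ2(x)) > 0 and M = max_{x∈Ω} ‖∇²E(x)‖_op. Let (x(t), v(t)) solve the ε-GAD with v(t) a unit vector and x(t) ∈ Ω on some time interval. Then for all t in that interval, d/dt ½‖∇E(x(t))‖² ≤ (−g + 2M ‖v(t) − v1(x(t))‖) ‖∇E(x(t))‖², where v1(x) is the sign choice of the first eigenvector closest to v(t). -/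
open Real Filter Set
open scoped Topology RealInnerProductSpace

noncomputable section
abbrev Vec (N : ℕ) := EuclideanSpace ℝ (Fin N)

noncomputable def hessCLM {N : ℕ} (E : Vec N → ℝ) (x : Vec N) : Vec N →L[ℝ] Vec N :=
  fderiv ℝ (gradient E) x

noncomputable def hessOp {N : ℕ} (E : Vec N → ℝ) (x : Vec N) : Module.End ℝ (Vec N) :=
  (hessCLM E x).toLinearMap

def IsMinEigen {N : ℕ} (T : Module.End ℝ (Vec N)) (lam : ℝ) : Prop :=
  T.HasEigenvalue lam ∧ ∀ μ : ℝ, T.HasEigenvalue μ → lam ≤ μ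

def IsMinEigvec {N : ℕ} (T : Module.End ℝ (Vec N)) (w : Vec N) : Prop :=
  ‖w‖ = 1 ∧ ∃ lam : ℝ, IsMinEigen T lam ∧ T w = lam • w

def TwoSmallestEigen {N : ℕ} (T : Module.End ℝ (Vec N)) (lam1 lam2 : ℝ) : Prop :=
  T.HasEigenvalue lam1 ∧ T.HasEigenvalue lam2 ∧ lam1 ≤ lam2 ∧
    (∀ μ : ℝ, T.HasEigenvalue μ → lam1 ≤ μ) ∧
    (∀ μ : ℝ, T.HasEigenvalue μ → μ = lam1 ∨ lam2 ≤ μ) ∧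
    (lam1 < lam2 → Module.finrank ℝ (T.eigenspace lam1) = 1)

/-- the reflection `(I - 2 w ⊗ w) u`. -/
def reflect {N : ℕ} (w u : Vec N) : Vec N := u - (2 * ⟪w, u⟫) • w

/-- ISD vector field with eigendirection `w`. -/
noncomputable def isdField {N : ℕ} (E : Vec N → ℝ) (x w : Vec N) : Vec N :=
  -(reflect w (gradient E x))

def IsISDSolOn {N : ℕ} (E : Vec N → ℝ) (x : ℝ → Vec N) (s : Set ℝ) : Prop :=
  ∀ t ∈ s, ∃ w : Vec N, IsMinEigvec (hessOp E (x t)) w ∧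
    HasDerivAt x (isdField E (x t) w) t

noncomputable def gadVField {N : ℕ} (E : Vec N → ℝ) (x v : Vec N) : Vec N :=
  -(hessCLM E x v) + ⟪v, hessCLM E x v⟫ • v

def IsGADSolOn {N : ℕ} (E : Vec N → ℝ) (ε : ℝ) (x v : ℝ → Vec N) (s : Set ℝ) : Prop :=
  ∀ t ∈ s, ‖v t‖ = 1 ∧ HasDerivAt x (-(reflect (v t) (gradient E (x t)))) t ∧
    HasDerivAt v ((ε ^ 2)⁻¹ • gadVField E (x t) (v t)) t

def IsIndexOneSaddle {N : ℕ} (E : Vec N → ℝ) (x : Vec N) : Prop :=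
  gradient E x = 0 ∧ ∃ lam1 lam2 : ℝ,
    TwoSmallestEigen (hessOp E x) lam1 lam2 ∧ lam1 < 0 ∧ 0 < lam2

end

section AuxLemmas
open InnerProductSpace
variable {N : ℕ}


noncomputable def dIso (N : ℕ) : StrongDual ℝ (Vec N) ≃ₗᵢ[ℝ] Vec N where
  toFun := (toDual ℝ (Vec N)).symm
  invFun := toDual ℝ (Vec N)
  map_add' := fun a b => map_add ((toDual ℝ (Vec N)).symm) a b
  map_smul' := fun c a => by
    have := map_smulₛₗ ((toDual ℝ (Vec N)).symm) c a
    simpa using this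
  left_inv := fun a => (toDual ℝ (Vec N)).apply_symm_apply a
  right_inv := fun a => (toDual ℝ (Vec N)).symm_apply_apply a
  norm_map' := fun a => (toDual ℝ (Vec N)).symm.norm_map a

lemma gradient_eq_comp (E : Vec N → ℝ) :
    gradient E = (dIso N ∘ fun z => fderiv ℝ E z) := rfl

lemma contDiff_gradient (E : Vec N → ℝ) (hE : ContDiff ℝ 3 E) :
    ContDiff ℝ 2 (gradient E) := by
  rw [gradient_eq_comp]
  exact ((dIso N).contDiff).comp (hE.fderiv_right (by norm_num))

lemma hessCLM_eq (E : Vec N → ℝ) (x : Vec N) :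
    hessCLM E x
      = ((dIso N : _ ≃ₗᵢ[ℝ] _) : _ →L[ℝ] _).comp (fderiv ℝ (fderiv ℝ E) x) := by
  rw [hessCLM, gradient_eq_comp]
  exact (dIso N).comp_fderiv

lemma hess_symm (E : Vec N → ℝ) (hE : ContDiff ℝ 3 E) (x : Vec N) :
    (hessOp E x).IsSymmetric := by
  intro u y
  have hsym : fderiv ℝ (fderiv ℝ E) x u y = fderiv ℝ (fderiv ℝ E) x y u :=
    (hE.contDiffAt.isSymmSndFDerivAt (by norm_num)) u y
  have key : ∀ z y : Vec N, ⟪hessOp E x z, y⟫ = fderiv ℝ (fderiv ℝ E) x z y := by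
    intro z y
    show ⟪hessCLM E x z, y⟫ = _
    rw [hessCLM_eq]
    exact toDual_symm_apply
  rw [key, real_inner_comm, key, hsym]

lemma quad_lower {T : Module.End ℝ (Vec N)} (hT : T.IsSymmetric)
    {lam1 lam2 : ℝ} (hgap : ∀ μ : ℝ, T.HasEigenvalue μ → μ = lam1 ∨ lam2 ≤ μ)
    (hrank : Module.finrank ℝ (T.eigenspace lam1) = 1)
    {w : Vec N} (hw : ‖w‖ = 1) (hwe : T w = lam1 • w)
    {y : Vec N} (hy : ⟪w, y⟫ = 0) : lam2 * ‖y‖ ^ 2 ≤ ⟪y, T y⟫ := by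
  have hn : Module.finrank ℝ (Vec N) = N := finrank_euclideanSpace_fin
  set b := hT.eigenvectorBasis hn with hb
  set μ := hT.eigenvalues hn with hμ
  have hw0 : w ≠ 0 := by intro h; simp [h] at hw
  have hspan : (ℝ ∙ w) = T.eigenspace lam1 := by
    apply Submodule.eq_of_le_of_finrank_le
    · rw [Submodule.span_singleton_le_iff_mem]
      exact Module.End.mem_eigenspace_iff.mpr hwe
    · rw [hrank, finrank_span_singleton hw0]
  have key : ∀ i, lam2 * ⟪y, b i⟫ ^ 2 ≤ μ i * ⟪y, b i⟫ ^ 2 := by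
    intro i
    rcases hgap (μ i) (hT.hasEigenvalue_eigenvalues hn i) with h | h
    · have hbmem : b i ∈ (ℝ ∙ w) := by
        rw [hspan, ← h]
        exact Module.End.mem_eigenspace_iff.mpr (hT.apply_eigenvectorBasis hn i)
      obtain ⟨t, ht⟩ := Submodule.mem_span_singleton.mp hbmem
      have : ⟪y, b i⟫ = 0 := by
        rw [← ht, real_inner_smul_right, real_inner_comm, hy, mul_zero]
      simp [this]
    · exact mul_le_mul_of_nonneg_right h (sq_nonneg _)
  have h1 : ⟪y, T y⟫ = ∑ i, μ i * ⟪y, b i⟫ ^ 2 := by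
    rw [← b.sum_inner_mul_inner y (T y)]
    congr 1; funext i
    have : ⟪b i, T y⟫ = μ i * ⟪b i, y⟫ := by
      rw [← hT (b i) y, hT.apply_eigenvectorBasis hn i, real_inner_smul_left]
      norm_num
      rfl
    rw [this, real_inner_comm (b i) y]; ring
  have h2 : ‖y‖ ^ 2 = ∑ i, ⟪y, b i⟫ ^ 2 := by
    rw [← real_inner_self_eq_norm_sq, ← b.sum_inner_mul_inner y y]
    congr 1; funext i
    rw [real_inner_comm (b i) y]; ring
  rw [h1, h2, Finset.mul_sum]
  exact Finset.sum_le_sum fun i _ => key i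

lemma proj_diff_bound {v w : Vec N} (hv : ‖v‖ = 1) (hw : ‖w‖ = 1)
    (hc : 0 ≤ ⟪v, w⟫) (u : Vec N) :
    ‖(⟪v, u⟫ • v - ⟪w, u⟫ • w : Vec N)‖ ≤ ‖v - w‖ * ‖u‖ := by
  by_cases hvw0 : v = w
  · simp [hvw0]
  set c := (⟪v, w⟫ : ℝ) with hcdef
  set a := (⟪v, u⟫ : ℝ) with hadef
  set b := (⟪w, u⟫ : ℝ) with hbdef
  have hc1 : c ≤ 1 := by
    have := real_inner_le_norm v w
    rw [hv, hw] at this; simpa using this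
  have hvwsq : ‖v - w‖ ^ 2 = 2 - 2 * c := by
    rw [norm_sub_sq_real, hv, hw]; ring
  have hclt : c < 1 := by
    rcases lt_or_eq_of_le hc1 with h | h
    · exact h
    · exfalso; apply hvw0
      have : ‖v - w‖ ^ 2 = 0 := by rw [hvwsq, h]; ring
      have : ‖v - w‖ = 0 := by nlinarith [norm_nonneg (v - w)]
      exact sub_eq_zero.mp (norm_eq_zero.mp this)
  have hzsq : ‖(a • v - b • w : Vec N)‖ ^ 2 = a ^ 2 - 2 * a * b * c + b ^ 2 := by
    rw [norm_sub_sq_real, norm_smul, norm_smul, real_inner_smul_left,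
      real_inner_smul_right, hv, hw]
    simp only [Real.norm_eq_abs, ← hcdef]
    rw [mul_pow, mul_pow, sq_abs, sq_abs]
    ring
  have hkey : 0 ≤ ‖((1 - c ^ 2) • u - (a - c * b) • v - (b - c * a) • w : Vec N)‖ ^ 2 :=
    sq_nonneg _
  have hexp : ‖((1 - c ^ 2) • u - (a - c * b) • v - (b - c * a) • w : Vec N)‖ ^ 2
      = (1 - c ^ 2) * ((1 - c ^ 2) * ‖u‖ ^ 2 - (a ^ 2 - 2 * a * b * c + b ^ 2)) := by
    have hvv : (⟪v, v⟫_ℝ : ℝ) = 1 := by rw [real_inner_self_eq_norm_sq, hv]; norm_num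
    have hww : (⟪w, w⟫_ℝ : ℝ) = 1 := by rw [real_inner_self_eq_norm_sq, hw]; norm_num
    have hwv : (⟪w, v⟫_ℝ : ℝ) = c := (real_inner_comm v w).trans hcdef.symm
    have huv : (⟪u, v⟫_ℝ : ℝ) = a := (real_inner_comm v u).trans hadef.symm
    have huw : (⟪u, w⟫_ℝ : ℝ) = b := (real_inner_comm w u).trans hbdef.symm
    have huu : (⟪u, u⟫_ℝ : ℝ) = ‖u‖ ^ 2 := real_inner_self_eq_norm_sq u
    rw [← real_inner_self_eq_norm_sq]
    simp only [inner_sub_left, inner_sub_right, real_inner_smul_left, real_inner_smul_right,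
      hvv, hww, hwv, huv, huw, huu, ← hcdef, ← hadef, ← hbdef]
    ring
  have hS : a ^ 2 - 2 * a * b * c + b ^ 2 ≤ (1 - c ^ 2) * ‖u‖ ^ 2 := by
    rw [hexp] at hkey
    have h1 : 0 < 1 - c ^ 2 := by nlinarith
    nlinarith
  have hfin : ‖(a • v - b • w : Vec N)‖ ^ 2 ≤ (‖v - w‖ * ‖u‖) ^ 2 := by
    rw [hzsq, mul_pow, hvwsq]
    nlinarith [sq_nonneg ‖u‖]
  nlinarith [norm_nonneg (a • v - b • w : Vec N),
    mul_nonneg (norm_nonneg (v - w)) (norm_nonneg u)]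

end AuxLemmas

/-- Along a GAD trajectory in a compact index-1 region `Ω`, with
`g = min_Ω min(-λ1, λ2)` and `M = max_Ω ‖∇²E‖_op`, one has
`d/dt ½‖∇E(x)‖² ≤ (-g + 2M ‖v - v1(x)‖) ‖∇E(x)‖²` for the sign of `v1(x)` closest to `v`. -/
theorem stmt4 {N : ℕ} (E : Vec N → ℝ) (hE : ContDiff ℝ 3 E)
    (Ω : Set (Vec N)) (hΩc : IsCompact Ω) (hΩne : Ω.Nonempty)
    (lam1 lam2 : Vec N → ℝ)
    (heig : ∀ x ∈ Ω, TwoSmallestEigen (hessOp E x) (lam1 x) (lam2 x) ∧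
      lam1 x < 0 ∧ 0 < lam2 x)
    (g M : ℝ) (hg : 0 < g)
    (hgmin : ∀ x ∈ Ω, g ≤ min (-(lam1 x)) (lam2 x))
    (hM : ∀ x ∈ Ω, ‖hessCLM E x‖ ≤ M)
    (ε : ℝ) (hε : 0 < ε) (s : Set ℝ) (hs : IsOpen s)
    (x v : ℝ → Vec N) (hsol : IsGADSolOn E ε x v s) (hxΩ : ∀ t ∈ s, x t ∈ Ω) :
    ∀ t ∈ s, ∀ w : Vec N, IsMinEigvec (hessOp E (x t)) w → 0 ≤ ⟪v t, w⟫ →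
      ∃ d : ℝ, HasDerivAt (fun τ => (1/2 : ℝ) * ‖gradient E (x τ)‖ ^ 2) d t ∧
        d ≤ (-g + 2 * M * ‖v t - w‖) * ‖gradient E (x t)‖ ^ 2 := by
  intro t ht w hwvec hvw
  obtain ⟨hvnorm, hx', hv'⟩ := hsol t ht
  obtain ⟨hwnorm, lam, ⟨hlamev, hlammin⟩, hwe0⟩ := hwvec
  obtain ⟨⟨h1ev, h2ev, h12, hmin1, hgap, hrank⟩, hl1neg, hl2pos⟩ := heig (x t) (hxΩ t ht)
  have hlam : lam = lam1 (x t) := le_antisymm (hlammin _ h1ev) (hmin1 _ hlamev)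
  set u := gradient E (x t) with hu
  set H := hessCLM E (x t) with hH
  set X := -(reflect (v t) (gradient E (x t))) with hX
  -- derivative existence
  have hgradC : ContDiff ℝ 2 (gradient E) := contDiff_gradient E hE
  have hdiffG : HasFDerivAt (gradient E) H (x t) :=
    ((hgradC.differentiable (by norm_num)) (x t)).hasFDerivAt
  have hG : HasDerivAt (fun τ => gradient E (x τ)) (H X) t := hdiffG.comp_hasDerivAt t hx'
  have hD : HasDerivAt (fun τ => (1/2 : ℝ) * ‖gradient E (x τ)‖ ^ 2) (⟪u, H X⟫) t := by
    have h2 := (hG.inner ℝ hG).const_mul (1/2 : ℝ)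
    simp only [real_inner_self_eq_norm_sq] at h2
    refine h2.congr_deriv ?_
    rw [real_inner_comm (H X) u]
    ring
  refine ⟨⟪u, H X⟫, hD, ?_⟩
  -- spectral setup
  have hsymm : (hessOp E (x t)).IsSymmetric := hess_symm E hE (x t)
  have hHsymm : ∀ p q : Vec N, ⟪H p, q⟫ = ⟪p, H q⟫ := fun p q => hsymm p q
  have hwe : H w = lam1 (x t) • w := by rw [← hlam]; exact hwe0
  have hwe' : hessOp E (x t) w = lam1 (x t) • w := hwe
  set a := (⟪v t, u⟫ : ℝ) with hadef
  set b := (⟪w, u⟫ : ℝ) with hbdef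
  have hperp : ⟪w, u - b • w⟫ = 0 := by
    rw [inner_sub_right, real_inner_smul_right, real_inner_self_eq_norm_sq, hwnorm, ← hbdef]
    ring
  have hquad : lam2 (x t) * ‖u - b • w‖ ^ 2 ≤ ⟪u - b • w, H (u - b • w)⟫ :=
    quad_lower hsymm hgap (hrank (lt_trans hl1neg hl2pos)) hwnorm hwe' hperp
  -- inner product facts
  have hub : (⟪u, w⟫ : ℝ) = b := (real_inner_comm w u).trans hbdef.symm
  have hww : (⟪w, w⟫ : ℝ) = 1 := by rw [real_inner_self_eq_norm_sq, hwnorm]; norm_num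
  have hiuHw : ⟪u, H w⟫ = lam1 (x t) * b := by
    rw [hwe, real_inner_smul_right, hub]
  have hwHu : ⟪w, H u⟫ = lam1 (x t) * b := by
    rw [← hHsymm w u, hwe, real_inner_smul_left, ← hbdef]
  have hwHw : ⟪w, H w⟫ = lam1 (x t) := by
    rw [hwe, real_inner_smul_right, hww]; ring
  -- decomposition of the derivative value
  have hd : ⟪u, H X⟫ = -(⟪u - b • w, H (u - b • w)⟫) + lam1 (x t) * b ^ 2
      + 2 * ⟪u, H (a • v t - b • w)⟫ := by
    simp only [hX, reflect, map_neg, map_sub, map_smul, inner_neg_right, inner_sub_right,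
      inner_sub_left, real_inner_smul_left, real_inner_smul_right,
      hiuHw, hwHu, hwHw, hub, ← hadef, ← hbdef]
    ring
  -- norm decomposition
  have hnorm : ‖u‖ ^ 2 = ‖u - b • w‖ ^ 2 + b ^ 2 := by
    have h := norm_add_sq_real (u - b • w) (b • w)
    rw [sub_add_cancel] at h
    rw [h, inner_smul_right, real_inner_comm w (u - b • w), hperp, norm_smul]
    simp [hwnorm, sq_abs]
  -- bounds
  have hgl := hgmin _ (hxΩ t ht)
  have hg1 : lam1 (x t) ≤ -g := by
    have := (le_min_iff.mp hgl).1; linarith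
  have hg2 : g ≤ lam2 (x t) := (le_min_iff.mp hgl).2
  have hHM : ‖H‖ ≤ M := hM _ (hxΩ t ht)
  have hMnn : (0:ℝ) ≤ M := le_trans (norm_nonneg H) hHM
  have hzb : ‖(a • v t - b • w : Vec N)‖ ≤ ‖v t - w‖ * ‖u‖ :=
    proj_diff_bound hvnorm hwnorm hvw u
  have hip : ⟪u, H (a • v t - b • w)⟫ ≤ M * (‖v t - w‖ * ‖u‖) * ‖u‖ := by
    have c3 : (0:ℝ) ≤ ‖u‖ := norm_nonneg u
    have c5 : (0:ℝ) ≤ ‖(a • v t - b • w : Vec N)‖ := norm_nonneg _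
    calc ⟪u, H (a • v t - b • w)⟫ ≤ ‖u‖ * ‖H (a • v t - b • w)‖ :=
          real_inner_le_norm _ _
      _ ≤ ‖u‖ * (‖H‖ * ‖(a • v t - b • w : Vec N)‖) :=
          mul_le_mul_of_nonneg_left (H.le_opNorm _) c3
      _ ≤ ‖u‖ * (M * (‖v t - w‖ * ‖u‖)) := by
          refine mul_le_mul_of_nonneg_left ?_ c3
          exact mul_le_mul hHM hzb c5 hMnn
      _ = M * (‖v t - w‖ * ‖u‖) * ‖u‖ := by ring
  have hP : (0:ℝ) ≤ ‖u - b • w‖ ^ 2 := sq_nonneg _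
  have hb2 : (0:ℝ) ≤ b ^ 2 := sq_nonneg _
  have e1 : g * ‖u - b • w‖ ^ 2 ≤ ⟪u - b • w, H (u - b • w)⟫ :=
    le_trans (mul_le_mul_of_nonneg_right hg2 hP) hquad
  have e2 : lam1 (x t) * b ^ 2 ≤ -g * b ^ 2 := mul_le_mul_of_nonneg_right hg1 hb2
  have hip' : 2 * ⟪u, H (a • v t - b • w)⟫
      ≤ 2 * M * ‖v t - w‖ * (‖u - b • w‖ ^ 2 + b ^ 2) := by
    calc 2 * ⟪u, H (a • v t - b • w)⟫ ≤ 2 * (M * (‖v t - w‖ * ‖u‖) * ‖u‖) := by linarith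
      _ = 2 * M * ‖v t - w‖ * ‖u‖ ^ 2 := by ring
      _ = 2 * M * ‖v t - w‖ * (‖u - b • w‖ ^ 2 + b ^ 2) := by rw [hnorm]
  have hrhs : (-g + 2 * M * ‖v t - w‖) * ‖u‖ ^ 2
      = -g * ‖u - b • w‖ ^ 2 + -g * b ^ 2
        + 2 * M * ‖v t - w‖ * (‖u - b • w‖ ^ 2 + b ^ 2) := by
    rw [hnorm]; ring
  rw [hd, hrhs]
  linarith [e1, e2, hip']
end

section
/- Let E ∈ C³(ℝ²) with 0 ∈ S, i.e. λ1(0) = λ2(0). Define F : ℝ² → ℝ² by F(x) = (⟨e1, ∇²E(x) e1⟩ − ⟨e2, ∇²E(x) e2⟩, ⟨e1, ∇²E(x) e2⟩), so that x ∈ S iff F(x) = 0. With E_ijk = ∇³E(0)[e_i, e_j, e_k], the Jacobian ∇F(0) = [[E111 − E122, E112 − E222], [E112, E122]] has determinant Δ := E111 E122 + E112 E222 − E112² − E122². If Δ ≠ 0, then 0 is an isolated point of S. -/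
open Real Filter Set
open scoped Topology RealInnerProductSpace

def SingularAt (E : Vec 2 → ℝ) (p : Vec 2) : Prop :=
  ∃ lam : ℝ, (hessOp E p).HasEigenvalue lam ∧
    ∀ μ : ℝ, (hessOp E p).HasEigenvalue μ → μ = lam

noncomputable section

/-- canonical basis vectors of `ℝ²`. -/
def e2 (i : Fin 2) : Vec 2 := EuclideanSpace.single i 1

/-- third partial derivatives `E_ijk = ∇³E(0)[e_i, e_j, e_k]`. -/
def D3 (E : Vec 2 → ℝ) (i j k : Fin 2) : ℝ :=
  iteratedFDeriv ℝ 3 E 0 ![e2 i, e2 j, e2 k]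

/-- the map `F(x) = (⟨e1, ∇²E(x) e1⟩ - ⟨e2, ∇²E(x) e2⟩, ⟨e1, ∇²E(x) e2⟩)`. -/
def Fmap (E : Vec 2 → ℝ) (x : Vec 2) : Vec 2 :=
  (WithLp.equiv 2 (Fin 2 → ℝ)).symm
    ![⟪e2 0, hessCLM E x (e2 0)⟫ - ⟪e2 1, hessCLM E x (e2 1)⟫,
      ⟪e2 0, hessCLM E x (e2 1)⟫]

/-- the Jacobian matrix `[[E111 - E122, E112 - E222], [E112, E122]]`. -/
def Jmat (E : Vec 2 → ℝ) : Matrix (Fin 2) (Fin 2) ℝ :=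
  !![D3 E 0 0 0 - D3 E 0 1 1, D3 E 0 0 1 - D3 E 1 1 1;
     D3 E 0 0 1, D3 E 0 1 1]

end

section Aux

/-- `toDual.symm` as a real linear isometry equivalence. -/
noncomputable def dualIso : (Vec 2 →L[ℝ] ℝ) ≃ₗᵢ[ℝ] Vec 2 where
  toFun φ := (InnerProductSpace.toDual ℝ (Vec 2)).symm φ
  invFun v := InnerProductSpace.toDual ℝ (Vec 2) v
  map_add' φ ψ := by simp
  map_smul' r φ := by simp
  left_inv φ := by simp
  right_inv v := by simp
  norm_map' φ := by simp

lemma hess_inner (E : Vec 2 → ℝ) (x u v : Vec 2) :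
    ⟪u, hessCLM E x v⟫ = fderiv ℝ (fderiv ℝ E) x v u := by
  have hgrad : gradient E = (dualIso : (Vec 2 →L[ℝ] ℝ) → Vec 2) ∘ (fderiv ℝ E) := rfl
  have hh : hessCLM E x =
      ((dualIso : (Vec 2 →L[ℝ] ℝ) →L[ℝ] Vec 2).comp (fderiv ℝ (fderiv ℝ E) x)) := by
    rw [hessCLM, hgrad, LinearIsometryEquiv.comp_fderiv]
  rw [hh]
  have : (dualIso : (Vec 2 →L[ℝ] ℝ) →L[ℝ] Vec 2).comp (fderiv ℝ (fderiv ℝ E) x) v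
      = (InnerProductSpace.toDual ℝ (Vec 2)).symm (fderiv ℝ (fderiv ℝ E) x v) := rfl
  rw [this, real_inner_comm]
  exact InnerProductSpace.toDual_symm_apply

lemma f2_symm {E : Vec 2 → ℝ} (hE : ContDiff ℝ 3 E) (y u v : Vec 2) :
    fderiv ℝ (fderiv ℝ E) y u v = fderiv ℝ (fderiv ℝ E) y v u := by
  have h1 : ∀ z, HasFDerivAt E (fderiv ℝ E z) z := fun z =>
    (hE.differentiable (by norm_num) z).hasFDerivAt
  have h2 : HasFDerivAt (fderiv ℝ E) (fderiv ℝ (fderiv ℝ E) y) y :=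
    ((hE.fderiv_right (m := 2) (by norm_num)).differentiable (by norm_num) y).hasFDerivAt
  exact second_derivative_symmetric h1 h2 u v

lemma hess_symm_s10 {E : Vec 2 → ℝ} (hE : ContDiff ℝ 3 E) (x u v : Vec 2) :
    ⟪hessCLM E x u, v⟫ = ⟪u, hessCLM E x v⟫ := by
  rw [real_inner_comm, hess_inner E x v u, hess_inner E x u v, f2_symm hE]

lemma vdecomp (v : Vec 2) : v = v 0 • e2 0 + v 1 • e2 1 := by
  ext i
  fin_cases i <;> simp [e2, EuclideanSpace.single_apply]

lemma e2_ne_zero (i : Fin 2) : e2 i ≠ 0 := by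
  intro h
  have h0 : (e2 i) i = (0 : Vec 2) i := by rw [h]
  simp [e2, EuclideanSpace.single_apply] at h0

lemma inner_e2 (i : Fin 2) (v : Vec 2) : ⟪e2 i, v⟫ = v i := by
  simp [e2, EuclideanSpace.inner_single_left]

lemma e2_apply (i j : Fin 2) : e2 i j = if j = i then 1 else 0 :=
  EuclideanSpace.single_apply i 1 j

/-- singularity is equivalent to the Hessian being a scalar matrix. -/
lemma singular_iff_scalar {E : Vec 2 → ℝ} (hE : ContDiff ℝ 3 E) (x : Vec 2) :
    SingularAt E x ↔ ∃ a : ℝ, ∀ v, hessCLM E x v = a • v := by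
  constructor
  · rintro ⟨lam, hlam, huniq⟩
    have hsym : (hessOp E x).IsSymmetric := fun u v => hess_symm_s10 hE x u v
    have hn : Module.finrank ℝ (Vec 2) = 2 := finrank_euclideanSpace_fin
    refine ⟨lam, fun v => ?_⟩
    have hb : ∀ i : Fin 2, hessOp E x ((hsym.eigenvectorBasis hn) i)
        = lam • (hsym.eigenvectorBasis hn) i := by
      intro i
      have h1 := hsym.apply_eigenvectorBasis hn i
      have h2 : hsym.eigenvalues hn i = lam :=
        huniq _ (hsym.hasEigenvalue_eigenvalues hn i)
      rw [h1, h2]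
      norm_cast
    have heq : hessOp E x = lam • (LinearMap.id : Vec 2 →ₗ[ℝ] Vec 2) := by
      apply Module.Basis.ext (hsym.eigenvectorBasis hn).toBasis
      intro i
      simpa using hb i
    have hv : hessOp E x v = lam • v := by rw [heq]; rfl
    exact hv
  · rintro ⟨a, ha⟩
    have hev : Module.End.HasEigenvalue (hessOp E x) a := by
      apply Module.End.hasEigenvalue_of_hasEigenvector (x := e2 0)
      exact ⟨Module.End.mem_eigenspace_iff.mpr (ha (e2 0)), e2_ne_zero 0⟩
    refine ⟨a, hev, fun μ hμ => ?_⟩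
    obtain ⟨v, hv, hv0⟩ := hμ.exists_hasEigenvector
    have h1 : a • v = μ • v := by
      rw [← ha v]
      exact Module.End.mem_eigenspace_iff.mp hv
    have h2 := sub_eq_zero.mpr h1
    rw [← sub_smul] at h2
    rcases smul_eq_zero.mp h2 with h | h
    · exact (sub_eq_zero.mp h).symm
    · exact absurd h hv0

lemma Fmap_eq (E : Vec 2 → ℝ) : Fmap E = fun x =>
    (fderiv ℝ (fderiv ℝ E) x (e2 0) (e2 0) - fderiv ℝ (fderiv ℝ E) x (e2 1) (e2 1)) • e2 0
      + (fderiv ℝ (fderiv ℝ E) x (e2 1) (e2 0)) • e2 1 := by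
  funext x
  simp only [Fmap, hess_inner]
  ext i
  fin_cases i <;> simp [e2, EuclideanSpace.single_apply]

lemma singular_iff_Fmap {E : Vec 2 → ℝ} (hE : ContDiff ℝ 3 E) (x : Vec 2) :
    SingularAt E x ↔ Fmap E x = 0 := by
  rw [singular_iff_scalar hE]
  constructor
  · rintro ⟨a, ha⟩
    have h00 : fderiv ℝ (fderiv ℝ E) x (e2 0) (e2 0) = a := by
      rw [← hess_inner, ha, inner_e2]; simp [e2, EuclideanSpace.single_apply]
    have h11 : fderiv ℝ (fderiv ℝ E) x (e2 1) (e2 1) = a := by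
      rw [← hess_inner, ha, inner_e2]; simp [e2, EuclideanSpace.single_apply]
    have h10 : fderiv ℝ (fderiv ℝ E) x (e2 1) (e2 0) = 0 := by
      rw [← hess_inner, ha, inner_e2]; simp [e2, EuclideanSpace.single_apply]
    rw [Fmap_eq]
    simp [h00, h11, h10]
  · intro hF
    rw [Fmap_eq] at hF
    have h0 := congrFun (congrArg (fun (w : Vec 2) (i : Fin 2) => w i) hF) 0
    have h1 := congrFun (congrArg (fun (w : Vec 2) (i : Fin 2) => w i) hF) 1
    simp [e2_apply] at h0 h1
    set a := fderiv ℝ (fderiv ℝ E) x (e2 0) (e2 0) with ha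
    refine ⟨a, fun v => ?_⟩
    have hT0 : hessCLM E x (e2 0) = a • e2 0 := by
      rw [vdecomp (hessCLM E x (e2 0))]
      have c0 : (hessCLM E x (e2 0)) 0 = a := by
        rw [← inner_e2 0 (hessCLM E x (e2 0)), hess_inner]
      have c1 : (hessCLM E x (e2 0)) 1 = 0 := by
        rw [← inner_e2 1 (hessCLM E x (e2 0)), hess_inner, f2_symm hE]
        exact h1
      rw [c0, c1]
      ext i; fin_cases i <;> simp [e2, EuclideanSpace.single_apply]
    have hT1 : hessCLM E x (e2 1) = a • e2 1 := by
      rw [vdecomp (hessCLM E x (e2 1))]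
      have c0 : (hessCLM E x (e2 1)) 0 = 0 := by
        rw [← inner_e2 0 (hessCLM E x (e2 1)), hess_inner]
        exact h1
      have c1 : (hessCLM E x (e2 1)) 1 = a := by
        rw [← inner_e2 1 (hessCLM E x (e2 1)), hess_inner, ha]
        linarith [h0]
      rw [c0, c1]
      ext i; fin_cases i <;> simp [e2, EuclideanSpace.single_apply]
    calc hessCLM E x v = hessCLM E x (v 0 • e2 0 + v 1 • e2 1) := by rw [← vdecomp]
      _ = v 0 • hessCLM E x (e2 0) + v 1 • hessCLM E x (e2 1) := by
          rw [map_add, map_smul, map_smul]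
      _ = v 0 • (a • e2 0) + v 1 • (a • e2 1) := by rw [hT0, hT1]
      _ = a • (v 0 • e2 0 + v 1 • e2 1) := by
          rw [smul_comm (v 0) a, smul_comm (v 1) a, smul_add]
      _ = a • v := by rw [← vdecomp]

end Aux

section Aux2

variable {E : Vec 2 → ℝ}

lemma f2_contDiff (hE : ContDiff ℝ 3 E) :
    ContDiff ℝ 1 (fderiv ℝ (fderiv ℝ E)) :=
  (hE.fderiv_right (m := 2) (by norm_num)).fderiv_right (m := 1) (by norm_num)

lemma hasFD_f2 (hE : ContDiff ℝ 3 E) :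
    HasFDerivAt (fderiv ℝ (fderiv ℝ E)) (fderiv ℝ (fderiv ℝ (fderiv ℝ E)) 0) 0 :=
  (((f2_contDiff hE).differentiable one_ne_zero) 0).hasFDerivAt

/-- third derivative at `0` evaluated at `(·, b, c)` as a CLM. -/
noncomputable def T3C (E : Vec 2 → ℝ) (b c : Vec 2) : Vec 2 →L[ℝ] ℝ :=
  (ContinuousLinearMap.apply ℝ ℝ c).comp
    ((ContinuousLinearMap.apply ℝ (Vec 2 →L[ℝ] ℝ) b).comp
      (fderiv ℝ (fderiv ℝ (fderiv ℝ E)) 0))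

lemma T3C_apply (E : Vec 2 → ℝ) (b c a : Vec 2) :
    T3C E b c a = fderiv ℝ (fderiv ℝ (fderiv ℝ E)) 0 a b c := rfl

lemma hasFD_f2_apply (hE : ContDiff ℝ 3 E) (b c : Vec 2) :
    HasFDerivAt (fun y => fderiv ℝ (fderiv ℝ E) y b c) (T3C E b c) 0 := by
  have h1 := (hasFD_f2 hE).clm_apply (hasFDerivAt_const b 0)
  have h2 := h1.clm_apply (hasFDerivAt_const c 0)
  refine h2.congr_fderiv ?_
  ext a
  simp [T3C]

lemma D3_eq (hE : ContDiff ℝ 3 E) (i j k : Fin 2) :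
    D3 E i j k = fderiv ℝ (fderiv ℝ (fderiv ℝ E)) 0 (e2 i) (e2 j) (e2 k) := by
  have hG : DifferentiableAt ℝ (iteratedFDeriv ℝ 2 E) 0 :=
    (hE.differentiable_iteratedFDeriv (by norm_num)) 0
  rw [D3, iteratedFDeriv_succ_apply_left]
  have h1 : (![e2 i, e2 j, e2 k] : Fin 3 → Vec 2) 0 = e2 i := rfl
  have h2 : Fin.tail (![e2 i, e2 j, e2 k] : Fin 3 → Vec 2) = ![e2 j, e2 k] := by
    funext l; fin_cases l <;> rfl
  rw [h1, h2, ← fderiv_continuousMultilinear_apply_const_apply hG ![e2 j, e2 k] (e2 i)]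
  have heq : (fun y => iteratedFDeriv ℝ 2 E y ![e2 j, e2 k])
      = fun y => fderiv ℝ (fderiv ℝ E) y (e2 j) (e2 k) := by
    funext y
    rw [iteratedFDeriv_two_apply]
    rfl
  rw [heq, (hasFD_f2_apply hE (e2 j) (e2 k)).fderiv]
  rfl

lemma T3_symm12 (hE : ContDiff ℝ 3 E) (a b c : Vec 2) :
    fderiv ℝ (fderiv ℝ (fderiv ℝ E)) 0 a b c
      = fderiv ℝ (fderiv ℝ (fderiv ℝ E)) 0 b a c := by
  have h1 : ∀ z, HasFDerivAt (fderiv ℝ E) (fderiv ℝ (fderiv ℝ E) z) z := fun z =>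
    (((hE.fderiv_right (m := 2) (by norm_num)).differentiable (by norm_num)) z).hasFDerivAt
  have h := second_derivative_symmetric h1 (hasFD_f2 hE) a b
  exact congrArg (fun φ => φ c) h

lemma T3_symm23 (hE : ContDiff ℝ 3 E) (a b c : Vec 2) :
    fderiv ℝ (fderiv ℝ (fderiv ℝ E)) 0 a b c
      = fderiv ℝ (fderiv ℝ (fderiv ℝ E)) 0 a c b := by
  have e1 : fderiv ℝ (fun y => fderiv ℝ (fderiv ℝ E) y b c) 0 = T3C E b c :=
    (hasFD_f2_apply hE b c).fderiv
  have e2' : fderiv ℝ (fun y => fderiv ℝ (fderiv ℝ E) y c b) 0 = T3C E c b :=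
    (hasFD_f2_apply hE c b).fderiv
  have hfun : (fun y => fderiv ℝ (fderiv ℝ E) y b c)
      = (fun y => fderiv ℝ (fderiv ℝ E) y c b) := funext fun y => f2_symm hE y b c
  have h : T3C E b c = T3C E c b := by rw [← e1, ← e2', hfun]
  rw [← T3C_apply, ← T3C_apply, h]

/-- candidate derivative of `Fmap` at `0`. -/
noncomputable def LF (E : Vec 2 → ℝ) : Vec 2 →L[ℝ] Vec 2 :=
  ((T3C E (e2 0) (e2 0) - T3C E (e2 1) (e2 1)).smulRight (e2 0))
    + ((T3C E (e2 1) (e2 0)).smulRight (e2 1))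

lemma hasFD_Fmap (hE : ContDiff ℝ 3 E) : HasFDerivAt (Fmap E) (LF E) 0 := by
  rw [Fmap_eq]
  exact (((hasFD_f2_apply hE (e2 0) (e2 0)).sub
      (hasFD_f2_apply hE (e2 1) (e2 1))).smul_const (e2 0)).add
    ((hasFD_f2_apply hE (e2 1) (e2 0)).smul_const (e2 1))

lemma Fmap_contDiff (hE : ContDiff ℝ 3 E) : ContDiff ℝ 1 (Fmap E) := by
  rw [Fmap_eq]
  have h := f2_contDiff hE
  have hc : ∀ b c : Vec 2, ContDiff ℝ 1 (fun y => fderiv ℝ (fderiv ℝ E) y b c) := fun b c =>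
    (h.clm_apply contDiff_const).clm_apply contDiff_const
  exact (((hc _ _).sub (hc _ _)).smul contDiff_const).add ((hc _ _).smul contDiff_const)

lemma LF_eq (hE : ContDiff ℝ 3 E) :
    LF E = LinearMap.toContinuousLinearMap (Matrix.toEuclideanLin (Jmat E)) := by
  apply ContinuousLinearMap.coe_injective
  apply Module.Basis.ext (EuclideanSpace.basisFun (Fin 2) ℝ).toBasis
  intro i
  have hbasis : (EuclideanSpace.basisFun (Fin 2) ℝ).toBasis i = e2 i := by
    simp [e2, EuclideanSpace.basisFun_apply]
  rw [hbasis]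
  show LF E (e2 i) = Matrix.toEuclideanLin (Jmat E) (e2 i)
  have hL : ∀ j : Fin 2, LF E (e2 i) j
      = (T3C E (e2 0) (e2 0) (e2 i) - T3C E (e2 1) (e2 1) (e2 i)) * e2 0 j
        + T3C E (e2 1) (e2 0) (e2 i) * e2 1 j := fun j => rfl
  have hR : Matrix.toEuclideanLin (Jmat E) (e2 i)
      = (WithLp.equiv 2 (Fin 2 → ℝ)).symm (fun j => Jmat E j i * 1) := by
    rw [show e2 i = (WithLp.equiv 2 (Fin 2 → ℝ)).symm (Pi.single i 1) from rfl,
      WithLp.equiv_symm_apply, Matrix.toEuclideanLin_apply_piLp_toLp, Matrix.mulVec_single]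
    rfl
  ext j
  rw [hL j, hR]
  have hRj : ((WithLp.equiv 2 (Fin 2 → ℝ)).symm (fun j => Jmat E j i * 1)) j
      = Jmat E j i * 1 := rfl
  rw [hRj]
  fin_cases i <;> fin_cases j
  · simp [e2_apply, Jmat, T3C_apply, D3_eq hE]
  · simp [e2_apply, Jmat, T3C_apply, D3_eq hE]
    linarith [T3_symm23 hE (e2 0) (e2 1) (e2 0)]
  · simp [e2_apply, Jmat, T3C_apply, D3_eq hE]
    linarith [T3_symm12 hE (e2 1) (e2 0) (e2 0), T3_symm23 hE (e2 0) (e2 1) (e2 0)]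
  · simp [e2_apply, Jmat, T3C_apply, D3_eq hE]
    linarith [T3_symm23 hE (e2 1) (e2 1) (e2 0), T3_symm12 hE (e2 1) (e2 0) (e2 1)]

lemma det_Jmat (E : Vec 2 → ℝ) : (Jmat E).det
    = D3 E 0 0 0 * D3 E 0 1 1 + D3 E 0 0 1 * D3 E 1 1 1
      - (D3 E 0 0 1) ^ 2 - (D3 E 0 1 1) ^ 2 := by
  rw [Jmat, Matrix.det_fin_two_of]
  ring

lemma isolated_of_det (hE : ContDiff ℝ 3 E) (h0 : SingularAt E 0)
    (hdet : (Jmat E).det ≠ 0) :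
    ∃ U ∈ 𝓝 (0 : Vec 2), ∀ x ∈ U, SingularAt E x → x = 0 := by
  have hlin : LinearMap.det ((Matrix.toEuclideanLin (Jmat E)) : Vec 2 →ₗ[ℝ] Vec 2) ≠ 0 := by
    rw [Matrix.toEuclideanLin_eq_toLin, LinearMap.det_toLin]
    exact hdet
  set eqv : Vec 2 ≃ₗ[ℝ] Vec 2 := LinearMap.equivOfDetNeZero _ hlin with heqv
  set ceqv : Vec 2 ≃L[ℝ] Vec 2 := eqv.toContinuousLinearEquiv with hceqvdef
  have hceqv : (ceqv : Vec 2 →L[ℝ] Vec 2)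
      = LinearMap.toContinuousLinearMap (Matrix.toEuclideanLin (Jmat E)) := by
    apply ContinuousLinearMap.coe_injective
    show (eqv : Vec 2 →ₗ[ℝ] Vec 2) = _
    rw [LinearMap.coe_toContinuousLinearMap]
    exact LinearEquiv.coe_ofIsUnitDet _
  have hstrict : HasStrictFDerivAt (Fmap E) (ceqv : Vec 2 →L[ℝ] Vec 2) 0 := by
    have h2 := ((Fmap_contDiff hE).contDiffAt (x := (0 : Vec 2))).hasStrictFDerivAt one_ne_zero
    rwa [(hasFD_Fmap hE).fderiv, LF_eq hE, ← hceqv] at h2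
  have hF0 : Fmap E 0 = 0 := (singular_iff_Fmap hE 0).mp h0
  refine ⟨(hstrict.toOpenPartialHomeomorph (Fmap E)).source,
    (hstrict.toOpenPartialHomeomorph (Fmap E)).open_source.mem_nhds
      hstrict.mem_toOpenPartialHomeomorph_source, ?_⟩
  intro x hx hsing
  have hFx : Fmap E x = 0 := (singular_iff_Fmap hE x).mp hsing
  apply (hstrict.toOpenPartialHomeomorph (Fmap E)).injOn hx
    hstrict.mem_toOpenPartialHomeomorph_source
  show (hstrict.toOpenPartialHomeomorph (Fmap E)) x = (hstrict.toOpenPartialHomeomorph (Fmap E)) 0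
  have hc := hstrict.toOpenPartialHomeomorph_coe
  rw [show ((hstrict.toOpenPartialHomeomorph (Fmap E)) : Vec 2 → Vec 2) = Fmap E from hc]
  rw [hFx, hF0]

end Aux2

/-- For `E ∈ C³(ℝ²)` with a singularity at `0`: `x ∈ S` iff `F(x) = 0`;
the Jacobian of `F` at `0` is the matrix `[[E111 - E122, E112 - E222], [E112, E122]]`,
whose determinant is `Δ = E111 E122 + E112 E222 - E112² - E122²`; and if `Δ ≠ 0` then `0`
is an isolated point of the singular set `S`. -/
theorem stmt10 (E : Vec 2 → ℝ) (hE : ContDiff ℝ 3 E) (h0 : SingularAt E 0)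
    (Δ : ℝ)
    (hΔ : Δ = D3 E 0 0 0 * D3 E 0 1 1 + D3 E 0 0 1 * D3 E 1 1 1
            - (D3 E 0 0 1) ^ 2 - (D3 E 0 1 1) ^ 2) :
    (∀ x : Vec 2, SingularAt E x ↔ Fmap E x = 0) ∧
    HasFDerivAt (Fmap E)
      (LinearMap.toContinuousLinearMap (Matrix.toEuclideanLin (Jmat E))) 0 ∧
    (Jmat E).det = Δ ∧
    (Δ ≠ 0 → ∃ U ∈ 𝓝 (0 : Vec 2), ∀ x ∈ U, SingularAt E x → x = 0) := by
  refine ⟨fun x => singular_iff_Fmap hE x, ?_, ?_, fun hne => isolated_of_det hE h0 ?_⟩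
  · rw [← LF_eq hE]; exact hasFD_Fmap hE
  · rw [hΔ]; exact det_Jmat E
  · rw [det_Jmat E, ← hΔ]; exact hne
end
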